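/- For any real matrix L, the matrix ψ = [[I, L^T], [-L, I]] · diag((I + L^T L)^{-1/2}, (I + LL^T)^{-1/2}) is orthogonal, i.e., ψ^T ψ = I. -/

import Mathlib

open Matrix

lemma aux_sq {m : ℕ} {S M : Matrix (Fin m) (Fin m) ℝ} (hS : S.PosDef) (hM : M.PosDef)
    (h : S * S = M⁻¹) : S * M * S = 1 := by
  have hMi : Invertible M := hM.isUnit.invertible
  have hcomm : S * M = M * S := by
    have h1 : S * M⁻¹ = M⁻¹ * S := by
      rw [← h, Matrix.mul_assoc]
    calc S * M = M * (M⁻¹ * S * M) := by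
          rw [← Matrix.mul_assoc, ← Matrix.mul_assoc, Matrix.mul_inv_of_invertible,
            Matrix.one_mul]
    _ = M * (S * M⁻¹ * M) := by rw [← h1]
    _ = M * S := by rw [Matrix.inv_mul_cancel_right_of_invertible]
  calc S * M * S = S * S * M := by rw [Matrix.mul_assoc, ← hcomm, Matrix.mul_assoc]
  _ = 1 := by rw [h, Matrix.inv_mul_of_invertible]

/-- For any real matrix `L`, the matrix
`ψ = [[I, Lᵀ], [-L, I]] * diag((I + LᵀL)^{-1/2}, (I + LLᵀ)^{-1/2})` is orthogonal. -/
theorem stmt_3 {p n : ℕ} (L : Matrix (Fin p) (Fin n) ℝ)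
    (Vih : Matrix (Fin n) (Fin n) ℝ) (Uih : Matrix (Fin p) (Fin p) ℝ)
    (hVih : Vih.PosDef) (hUih : Uih.PosDef)
    (hV : Vih * Vih = (1 + Lᵀ * L)⁻¹) (hU : Uih * Uih = (1 + L * Lᵀ)⁻¹) :
    ((Matrix.fromBlocks 1 Lᵀ (-L) 1) * (Matrix.fromBlocks Vih 0 0 Uih))ᵀ *
      ((Matrix.fromBlocks 1 Lᵀ (-L) 1) * (Matrix.fromBlocks Vih 0 0 Uih)) = 1 := by
  have hVpd : (1 + Lᵀ * L : Matrix (Fin n) (Fin n) ℝ).PosDef := by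
    have := Matrix.posSemidef_conjTranspose_mul_self L
    simpa using Matrix.PosDef.add_posSemidef Matrix.PosDef.one this
  have hUpd : (1 + L * Lᵀ : Matrix (Fin p) (Fin p) ℝ).PosDef := by
    have := Matrix.posSemidef_self_mul_conjTranspose L
    simpa using Matrix.PosDef.add_posSemidef Matrix.PosDef.one this
  have hVkey := aux_sq hVih hVpd hV
  have hUkey := aux_sq hUih hUpd hU
  have hVsym : Vihᵀ = Vih := (by simpa using hVih.1 : Vih.IsSymm)
  have hUsym : Uihᵀ = Uih := (by simpa using hUih.1 : Uih.IsSymm)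
  rw [Matrix.transpose_mul, Matrix.fromBlocks_transpose, Matrix.fromBlocks_transpose]
  simp only [Matrix.fromBlocks_multiply, hVsym, hUsym, Matrix.transpose_one,
    Matrix.transpose_neg, Matrix.transpose_transpose, Matrix.mul_zero, Matrix.zero_mul,
    Matrix.mul_one, Matrix.one_mul]
  simp only [Matrix.transpose_zero, Matrix.zero_mul, Matrix.mul_zero, add_zero, zero_add,
    neg_zero, Matrix.neg_mul, Matrix.mul_neg, neg_neg]
  have e1 : Vih * Vih + Vih * Lᵀ * (L * Vih) = 1 := by
    rw [← hVkey]
    simp only [Matrix.mul_add, Matrix.mul_one, Matrix.add_mul, Matrix.mul_assoc]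
  have e2 : Vih * (Lᵀ * Uih) + -(Vih * Lᵀ * Uih) = 0 := by
    rw [Matrix.mul_assoc, add_neg_cancel]
  have e3 : Uih * L * Vih + -(Uih * (L * Vih)) = 0 := by
    rw [Matrix.mul_assoc, add_neg_cancel]
  have e4 : Uih * L * (Lᵀ * Uih) + Uih * Uih = 1 := by
    rw [add_comm, ← hUkey]
    simp only [Matrix.mul_add, Matrix.mul_one, Matrix.add_mul, Matrix.mul_assoc]
  rw [e1, e2, e3, e4, Matrix.fromBlocks_one]
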